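/- arXiv:1307.5676 — 3 statements merged into one kernel-verified Lean document; each statement's English description precedes it below -/
import Mathlib

section
/- Let E be a real separable Banach space and let X_1, X_2, ... be E-valued random variables with partial sums S_n := X_1 + ... + X_n. Suppose (a_n) is a sequence of positive real numbers such that the triangular array (a_n X_j, 1 ≤ j ≤ n, n ≥ 1) is infinitesimal, and suppose (b_n) ⊂ E is such that the distributions of a_n S_n + b_n converge weakly to a non-degenerate Borel probability measure μ on E. Then a_n → 0 as n → ∞. -/
open MeasureTheory Filter Topology

noncomputable section

/-- If the triangular array `(a n • X k, 1 ≤ k ≤ n)` is infinitesimal and the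
distributions of `a n • S n + b n` converge weakly to a non-degenerate limit,
then `a n → 0`. -/
theorem norming_constants_tendsto_zero
    {Ω : Type*} [MeasurableSpace Ω] (P : Measure Ω) [IsProbabilityMeasure P]
    {E : Type*} [NormedAddCommGroup E] [NormedSpace ℝ E] [CompleteSpace E]
    [TopologicalSpace.SeparableSpace E] [MeasurableSpace E] [BorelSpace E]
    (X : ℕ → Ω → E) (hXmeas : ∀ k, Measurable (X k))
    (a : ℕ → ℝ) (b : ℕ → E) (μ : Measure E) [IsProbabilityMeasure μ]
    (hapos : ∀ n, 0 < a n)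
    (hinfin : ∀ ε > 0,
      Tendsto (fun n => ⨆ k ∈ Finset.Icc 1 n, P {ω | a n * ‖X k ω‖ > ε})
        atTop (𝓝 0))
    (hconv : ∀ f : BoundedContinuousFunction E ℝ,
      Tendsto (fun n => ∫ ω, f (a n • (∑ k ∈ Finset.Icc 1 n, X k ω) + b n) ∂P)
        atTop (𝓝 (∫ x, f x ∂μ)))
    (hnondeg : ¬ ∃ x : E, μ = Measure.dirac x) :
    Tendsto a atTop (𝓝 0) := by
  by_contra hnot
  -- Extract δ > 0 with a n ≥ δ for arbitrarily large n
  obtain ⟨δ, hδpos, hδ⟩ : ∃ δ > 0, ∀ N : ℕ, ∃ n ≥ N, δ ≤ a n := by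
    rw [Metric.tendsto_atTop] at hnot
    push_neg at hnot
    obtain ⟨ε, hε, h⟩ := hnot
    refine ⟨ε, hε, fun N => ?_⟩
    obtain ⟨n, hn, hdist⟩ := h N
    refine ⟨n, hn, ?_⟩
    rwa [Real.dist_eq, sub_zero, abs_of_pos (hapos n)] at hdist
  -- Step A : every X k (k ≥ 1) is a.s. zero
  have hX0 : ∀ k : ℕ, 1 ≤ k → ∀ᵐ ω ∂P, X k ω = 0 := by
    intro k hk
    have key : ∀ t : ℝ, 0 < t → P {ω | ‖X k ω‖ > t} = 0 := by
      intro t ht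
      by_contra hne
      have hpos : 0 < P {ω | ‖X k ω‖ > t} := pos_iff_ne_zero.mpr hne
      have h1 := hinfin (δ * t) (mul_pos hδpos ht)
      have hev : ∀ᶠ n in atTop,
          (⨆ j ∈ Finset.Icc 1 n, P {ω | a n * ‖X j ω‖ > δ * t})
            < P {ω | ‖X k ω‖ > t} :=
        h1.eventually_lt_const hpos
      obtain ⟨N, hN⟩ := eventually_atTop.mp hev
      obtain ⟨n, hn, han⟩ := hδ (max N k)
      have hnN : N ≤ n := le_trans (le_max_left _ _) hn
      have hnk : k ≤ n := le_trans (le_max_right _ _) hn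
      have hsub : {ω | ‖X k ω‖ > t} ⊆ {ω | a n * ‖X k ω‖ > δ * t} := by
        intro ω hω
        have h2 : δ * t < δ * ‖X k ω‖ := by
          exact mul_lt_mul_of_pos_left hω hδpos
        have h3 : δ * ‖X k ω‖ ≤ a n * ‖X k ω‖ :=
          mul_le_mul_of_nonneg_right han (norm_nonneg _)
        exact lt_of_lt_of_le h2 h3
      have hle1 : P {ω | ‖X k ω‖ > t} ≤ P {ω | a n * ‖X k ω‖ > δ * t} :=
        measure_mono hsub
      have hmem : k ∈ Finset.Icc 1 n := Finset.mem_Icc.mpr ⟨hk, hnk⟩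
      have hle2 : P {ω | a n * ‖X k ω‖ > δ * t}
          ≤ ⨆ j ∈ Finset.Icc 1 n, P {ω | a n * ‖X j ω‖ > δ * t} :=
        le_iSup₂ (f := fun j _ => P {ω | a n * ‖X j ω‖ > δ * t}) k hmem
      exact absurd (lt_of_le_of_lt (hle1.trans hle2) (hN n hnN)) (lt_irrefl _)
    rw [ae_iff]
    have hsub : {ω | ¬ X k ω = 0} ⊆ ⋃ m : ℕ, {ω | ‖X k ω‖ > 1 / (m + 1)} := by
      intro ω hω
      have hpos : 0 < ‖X k ω‖ := norm_pos_iff.mpr hω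
      obtain ⟨m, hm⟩ := exists_nat_one_div_lt hpos
      exact Set.mem_iUnion.mpr ⟨m, hm⟩
    exact measure_mono_null hsub
      (measure_iUnion_null fun m => key _ (by positivity))
  have hXall : ∀ᵐ ω ∂P, ∀ k : ℕ, 1 ≤ k → X k ω = 0 := by
    rw [ae_all_iff]
    intro k
    by_cases hk : 1 ≤ k
    · exact (hX0 k hk).mono fun ω h _ => h
    · exact Eventually.of_forall fun ω h => absurd h hk
  -- Step B : f (b n) → ∫ f dμ for every bounded continuous f
  have hfb : ∀ f : BoundedContinuousFunction E ℝ,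
      Tendsto (fun n => f (b n)) atTop (𝓝 (∫ x, f x ∂μ)) := by
    intro f
    refine (hconv f).congr fun n => ?_
    have hae : ∀ᵐ ω ∂P,
        f (a n • (∑ k ∈ Finset.Icc 1 n, X k ω) + b n) = f (b n) := by
      filter_upwards [hXall] with ω hω
      rw [Finset.sum_eq_zero fun k hk => hω k (Finset.mem_Icc.mp hk).1,
        smul_zero, zero_add]
    rw [integral_congr_ae hae]
    simp
  -- Step C : b n converges
  have hcenter : ∀ r : ℝ, 0 < r → ∃ x : E, μ (Metric.ball x r) ≠ 0 := by
    intro r hr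
    obtain ⟨s, hs_count, hs_dense⟩ := TopologicalSpace.exists_countable_dense E
    by_contra h
    push_neg at h
    have hcov : (Set.univ : Set E) ⊆ ⋃ x ∈ s, Metric.ball x r := by
      intro y _
      obtain ⟨x, hxs, hxy⟩ := hs_dense.exists_dist_lt y hr
      exact Set.mem_biUnion hxs (by rwa [Metric.mem_ball])
    have h0 : μ (⋃ x ∈ s, Metric.ball x r) = 0 :=
      (measure_biUnion_null_iff hs_count).mpr fun x hx => h x
    have : μ Set.univ = 0 := measure_mono_null hcov h0
    simp [measure_univ] at this
  -- key eventual localization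
  have hloc : ∀ r : ℝ, 0 < r → ∃ x : E, ∀ᶠ n in atTop, dist (b n) x < 2 * r := by
    intro r hr
    obtain ⟨x, hx⟩ := hcenter r hr
    -- bump function
    have hval : ∀ y : E, 0 ≤ max 0 (2 - ‖y - x‖ / r) ∧ max 0 (2 - ‖y - x‖ / r) ≤ 2 := by
      intro y
      constructor
      · exact le_max_left _ _
      · refine max_le (by norm_num) ?_
        have : 0 ≤ ‖y - x‖ / r := div_nonneg (norm_nonneg _) hr.le
        linarith
    set f : BoundedContinuousFunction E ℝ :=
      BoundedContinuousFunction.mkOfBound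
        ⟨fun y => max 0 (2 - ‖y - x‖ / r), by fun_prop⟩ 2
        (by
          intro y z
          have hy := hval y
          have hz := hval z
          rw [Real.dist_eq]
          simp only [ContinuousMap.coe_mk]
          rw [abs_sub_le_iff]
          constructor <;> linarith [hy.1, hy.2, hz.1, hz.2]) with hf
    have hf_apply : ∀ y : E, f y = max 0 (2 - ‖y - x‖ / r) := fun y => rfl
    -- integral lower bound
    have hind_le : ∀ y : E,
        (Metric.ball x r).indicator (fun _ => (1 : ℝ)) y ≤ f y := by
      intro y
      by_cases hy : y ∈ Metric.ball x r
      · rw [Set.indicator_of_mem hy, hf_apply]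
        have hdy : ‖y - x‖ < r := by rwa [← dist_eq_norm]
        have : ‖y - x‖ / r < 1 := (div_lt_one hr).mpr hdy
        refine le_max_of_le_right (by linarith)
      · rw [Set.indicator_of_notMem hy]
        exact (hval y).1
    have hint : (μ (Metric.ball x r)).toReal ≤ ∫ y, f y ∂μ := by
      have h1 : ∫ y, (Metric.ball x r).indicator (fun _ => (1 : ℝ)) y ∂μ
          = (μ (Metric.ball x r)).toReal := by
        rw [integral_indicator Metric.isOpen_ball.measurableSet]
        simp [Measure.real]
      rw [← h1]
      exact integral_mono
        ((integrable_const (1 : ℝ)).indicator Metric.isOpen_ball.measurableSet)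
        (f.integrable μ) hind_le
    have hLpos : 0 < ∫ y, f y ∂μ :=
      lt_of_lt_of_le (ENNReal.toReal_pos hx (measure_ne_top μ _)) hint
    have hev : ∀ᶠ n in atTop, 0 < f (b n) :=
      (hfb f).eventually (lt_mem_nhds hLpos)
    refine ⟨x, hev.mono fun n hn => ?_⟩
    by_contra hcon
    push_neg at hcon
    have h2r : 2 ≤ ‖b n - x‖ / r := by
      rw [le_div_iff₀ hr]
      rw [dist_eq_norm] at hcon
      linarith
    have : f (b n) = 0 := by
      rw [hf_apply]
      exact max_eq_left (by linarith)
    rw [this] at hn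
    exact lt_irrefl 0 hn
  have hcauchy : CauchySeq b := by
    rw [Metric.cauchySeq_iff']
    intro ε hε
    obtain ⟨x, hx⟩ := hloc (ε / 5) (by linarith)
    obtain ⟨N, hN⟩ := eventually_atTop.mp hx
    refine ⟨N, fun n hn => ?_⟩
    have h1 := hN n hn
    have h2 := hN N le_rfl
    calc dist (b n) (b N) ≤ dist (b n) x + dist x (b N) := dist_triangle _ _ _
      _ = dist (b n) x + dist (b N) x := by rw [dist_comm x]
      _ < 2 * (ε / 5) + 2 * (ε / 5) := add_lt_add h1 h2
      _ < ε := by linarith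
  obtain ⟨x₀, hb⟩ := cauchySeq_tendsto_of_complete hcauchy
  -- Step D : μ = dirac x₀
  let κ : ℕ → ProbabilityMeasure E := fun n => ⟨Measure.dirac (b n), inferInstance⟩
  have hdirac : ∀ (f : BoundedContinuousFunction E ℝ) (y : E),
      ∫ ω, f ω ∂(Measure.dirac y) = f y := fun f y =>
    integral_dirac' _ _ f.continuous.stronglyMeasurable
  have h1 : Tendsto κ atTop (𝓝 (⟨μ, inferInstance⟩ : ProbabilityMeasure E)) := by
    refine (ProbabilityMeasure.tendsto_iff_forall_integral_tendsto).2 ?_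
    intro f
    have heq : ∀ n, ∫ ω, f ω ∂((κ n : ProbabilityMeasure E) : Measure E) = f (b n) :=
      fun n => hdirac f (b n)
    simp only [heq]
    exact hfb f
  have h2 : Tendsto κ atTop (𝓝 (⟨Measure.dirac x₀, inferInstance⟩ : ProbabilityMeasure E)) := by
    refine (ProbabilityMeasure.tendsto_iff_forall_integral_tendsto).2 ?_
    intro f
    have heq : ∀ n, ∫ ω, f ω ∂((κ n : ProbabilityMeasure E) : Measure E) = f (b n) :=
      fun n => hdirac f (b n)
    simp only [heq]
    show Tendsto (fun n => f (b n)) atTop (𝓝 (∫ ω, f ω ∂(Measure.dirac x₀)))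
    rw [hdirac f x₀]
    exact (f.continuous.tendsto x₀).comp hb
  have huniq := tendsto_nhds_unique h1 h2
  exact hnondeg ⟨x₀, congrArg ProbabilityMeasure.toMeasure huniq⟩
end
end

section
/- Let (a_n) be a sequence of positive real numbers with a_n → 0 and a_{n+1}/a_n → 1 as n → ∞, and let c ∈ (0,1) be fixed. For each n define m_n := max{k : 1 ≤ k ≤ n−1 and a_n/a_k ≤ c} if such k exists, and m_n := 1 otherwise. Then m_n → ∞, n − m_n → ∞, and a_n/a_{m_n} → c as n → ∞. -/
open Filter Topology

private lemma ratio_shift (a : ℕ → ℝ) (hapos : ∀ n, 0 < a n)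
    (haratio : Tendsto (fun n => a (n + 1) / a n) atTop (𝓝 1)) :
    ∀ i : ℕ, Tendsto (fun n => a (n + i) / a n) atTop (𝓝 1) := by
  intro i
  induction i with
  | zero =>
    simpa using Tendsto.congr (fun n => by rw [div_self (hapos n).ne']) tendsto_const_nhds
  | succ i ih =>
    have h1 : Tendsto (fun n => a (n + i + 1) / a (n + i)) atTop (𝓝 1) :=
      haratio.comp (tendsto_add_atTop_nat i)
    have := h1.mul ih
    rw [one_mul] at this
    refine this.congr fun n => ?_
    have h5 := (hapos (n + i)).ne'
    have h6 := (hapos n).ne'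
    show a (n + i + 1) / a (n + i) * (a (n + i) / a n) = a (n + (i + 1)) / a n
    rw [show n + (i + 1) = n + i + 1 from rfl]
    field_simp

private lemma ratio_back (a : ℕ → ℝ) (hapos : ∀ n, 0 < a n)
    (haratio : Tendsto (fun n => a (n + 1) / a n) atTop (𝓝 1)) (i : ℕ) :
    Tendsto (fun n => a n / a (n - i)) atTop (𝓝 1) := by
  have h := (ratio_shift a hapos haratio i).comp (tendsto_sub_atTop_nat i)
  refine h.congr' ?_
  filter_upwards [eventually_ge_atTop i] with n hn
  simp [Function.comp, Nat.sub_add_cancel hn]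

/-- If `a n → 0`, `a (n+1)/a n → 1` and `m n` is the largest index
`1 ≤ k ≤ n - 1` with `a n / a k ≤ c` (and `m n = 1` if no such index exists),
then `m n → ∞`, `n - m n → ∞` and `a n / a (m n) → c`. -/
theorem blocking_indices_properties
    (a : ℕ → ℝ) (hapos : ∀ n, 0 < a n)
    (ha0 : Tendsto a atTop (𝓝 0))
    (haratio : Tendsto (fun n => a (n + 1) / a n) atTop (𝓝 1))
    (c : ℝ) (hc : c ∈ Set.Ioo (0 : ℝ) 1)
    (m : ℕ → ℕ)
    (hm_def : ∀ n, (∃ k, 1 ≤ k ∧ k ≤ n - 1 ∧ a n / a k ≤ c) →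
      (1 ≤ m n ∧ m n ≤ n - 1 ∧ a n / a (m n) ≤ c ∧
        ∀ k, 1 ≤ k → k ≤ n - 1 → a n / a k ≤ c → k ≤ m n))
    (hm_def' : ∀ n, ¬ (∃ k, 1 ≤ k ∧ k ≤ n - 1 ∧ a n / a k ≤ c) → m n = 1) :
    Tendsto m atTop atTop ∧ Tendsto (fun n => n - m n) atTop atTop ∧
      Tendsto (fun n => a n / a (m n)) atTop (𝓝 c) := by
  obtain ⟨hc0, hc1⟩ := hc
  -- key eventual fact: the defining existential holds and `m n ≥ max K 1`
  have hex : ∀ K : ℕ, ∀ᶠ n in atTop,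
      (∃ k, 1 ≤ k ∧ k ≤ n - 1 ∧ a n / a k ≤ c) ∧ max K 1 ≤ m n := by
    intro K
    set K' := max K 1 with hK'
    have hK'1 : 1 ≤ K' := le_max_right _ _
    have hpos : (0 : ℝ) < c * a K' := mul_pos hc0 (hapos K')
    have h1 : ∀ᶠ n in atTop, a n < c * a K' := ha0.eventually_lt_const hpos
    filter_upwards [h1, eventually_ge_atTop (K' + 1)] with n h hn
    have hkle : K' ≤ n - 1 := by omega
    have hdiv : a n / a K' ≤ c := (div_le_iff₀ (hapos K')).mpr h.le
    have hE : ∃ k, 1 ≤ k ∧ k ≤ n - 1 ∧ a n / a k ≤ c := ⟨K', hK'1, hkle, hdiv⟩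
    exact ⟨hE, (hm_def n hE).2.2.2 K' hK'1 hkle hdiv⟩
  have hm_tendsto : Tendsto m atTop atTop := by
    refine tendsto_atTop.mpr fun b => ?_
    filter_upwards [hex b] with n hn
    exact le_trans (le_max_left b 1) hn.2
  refine ⟨hm_tendsto, ?_, ?_⟩
  · -- n - m n → ∞
    refine tendsto_atTop.mpr fun b => ?_
    have hev : ∀ᶠ n in atTop, ∀ i ∈ Finset.Icc 1 b, c < a n / a (n - i) := by
      rw [eventually_all_finset]
      intro i _
      exact (ratio_back a hapos haratio i).eventually_const_lt hc1
    filter_upwards [hev, eventually_ge_atTop (b + 2)] with n h hn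
    by_cases hE : ∃ k, 1 ≤ k ∧ k ≤ n - 1 ∧ a n / a k ≤ c
    · obtain ⟨h1, h2, h3, _⟩ := hm_def n hE
      by_contra hcon
      push_neg at hcon
      have hi1 : 1 ≤ n - m n := by omega
      have hib : n - m n ≤ b := by omega
      have hlt : c < a n / a (n - (n - m n)) :=
        h (n - m n) (Finset.mem_Icc.mpr ⟨hi1, hib⟩)
      have heq : n - (n - m n) = m n := by omega
      rw [heq] at hlt
      linarith
    · rw [hm_def' n hE]; omega
  · -- a n / a (m n) → c
    have hub : ∀ᶠ n in atTop, a n / a (m n) ≤ c := by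
      filter_upwards [hex 1] with n hn
      exact (hm_def n hn.1).2.2.1
    have hlb : ∀ᶠ n in atTop, c * (a (m n + 1) / a (m n)) ≤ a n / a (m n) := by
      filter_upwards [hex 1] with n hn
      obtain ⟨h1, h2, h3, h4⟩ := hm_def n hn.1
      have hgt : c < a n / a (m n + 1) := by
        by_cases hk : m n + 1 ≤ n - 1
        · by_contra hle
          push_neg at hle
          have := h4 (m n + 1) (by omega) hk hle
          omega
        · have hne : m n + 1 = n := by omega
          rw [hne, div_self (hapos n).ne']
          exact hc1
      calc c * (a (m n + 1) / a (m n))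
          ≤ (a n / a (m n + 1)) * (a (m n + 1) / a (m n)) :=
            mul_le_mul_of_nonneg_right hgt.le
              (div_nonneg (hapos _).le (hapos _).le)
        _ = a n / a (m n) := by
            have h5 := (hapos (m n + 1)).ne'
            have h6 := (hapos (m n)).ne'
            field_simp
    have hg : Tendsto (fun n => c * (a (m n + 1) / a (m n))) atTop (𝓝 (c * 1)) :=
      tendsto_const_nhds.mul (haratio.comp hm_tendsto)
    rw [mul_one] at hg
    exact tendsto_of_tendsto_of_tendsto_of_le_of_le' hg tendsto_const_nhds hlb hub
end

section
/- Let E be a real separable Banach space and let X_1, X_2, ... be a sequence of E-valued random variables with partial sums S_n := X_1 + ... + X_n, satisfying: (i) α(X; n) → 0 as n → ∞; (ii) a_n > 0 and the triangular array (a_n X_j, 1 ≤ j ≤ n, n ≥ 1) is infinitesimal; (iii) the distributions of a_n S_n + b_n converge weakly to a non-degenerate Borel probability measure μ on E, for some (b_n) ⊂ E. Fix c ∈ (0,1) and let (m_n), (q_n) be sequences of positive integers with m_n → ∞, n − m_n → ∞, a_n/a_{m_n} → c, q_n → ∞, and m_n + q_n < n for all sufficiently large n, and suppose the random variables V_n :=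 a_n (S_{m_n+q_n} − S_{m_n}) satisfy ‖V_n‖ → 0 in probability. Then the family of distributions of W_n := a_n (S_n − S_{m_n+q_n}) + b_n − (a_n/a_{m_n}) b_{m_n}, n ≥ 1, is uniformly tight. -/
open MeasureTheory Filter Topology
open scoped ENNReal NNReal

noncomputable section

lemma aux_single {E : Type*} [NormedAddCommGroup E] [TopologicalSpace.SeparableSpace E]
    [MeasurableSpace E] [OpensMeasurableSpace E]
    (ν : Measure E) [IsProbabilityMeasure ν] {δ ε : ℝ} (hδ : 0 < δ) (hε : 0 < ε) :
    ∃ s : Finset E, ν (⋃ y ∈ s, Metric.ball y δ)ᶜ ≤ ENNReal.ofReal ε := by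
  have : Nonempty E := ⟨0⟩
  set u := TopologicalSpace.denseSeq E with hu_def
  have hu : DenseRange u := TopologicalSpace.denseRange_denseSeq E
  set C : ℕ → Set E := fun N => (⋃ i ∈ Finset.range N, Metric.ball (u i) δ)ᶜ with hC
  have hmono : Antitone C := by
    intro i j hij
    apply Set.compl_subset_compl.2
    intro x hx
    simp only [Set.mem_iUnion, Finset.mem_range] at hx ⊢
    obtain ⟨k, hk, hb⟩ := hx
    exact ⟨k, lt_of_lt_of_le hk hij, hb⟩
  have hinter : ⋂ N, C N = ∅ := by
    ext x
    simp only [Set.mem_iInter, Set.mem_empty_iff_false, iff_false, not_forall, hC,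
      Set.mem_compl_iff, not_not, Set.mem_iUnion, Metric.mem_ball, Finset.mem_range]
    obtain ⟨i, hi⟩ := hu.exists_dist_lt x hδ
    exact ⟨i + 1, i, Nat.lt_succ_self i, hi⟩
  have hmeas : ∀ N, NullMeasurableSet (C N) ν := fun N =>
    ((isOpen_biUnion fun i _ => Metric.isOpen_ball).measurableSet.compl).nullMeasurableSet
  have htend := tendsto_measure_iInter_atTop hmeas hmono ⟨0, measure_ne_top ν _⟩
  rw [hinter, measure_empty] at htend
  have h2 := htend.eventually_lt_const (ENNReal.ofReal_pos.2 hε)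
  obtain ⟨N, hN⟩ := h2.exists
  classical
  refine ⟨(Finset.range N).image u, le_of_lt ?_⟩
  have hset : (⋃ y ∈ (Finset.range N).image u, Metric.ball y δ) =
      ⋃ i ∈ Finset.range N, Metric.ball (u i) δ := by
    ext x
    simp only [Set.mem_iUnion, Finset.mem_image, Finset.mem_range]
    constructor
    · rintro ⟨y, ⟨i, hi, rfl⟩, hb⟩; exact ⟨i, hi, hb⟩
    · rintro ⟨i, hi, hb⟩; exact ⟨u i, ⟨i, hi, rfl⟩, hb⟩
  rw [hset]
  exact hN

lemma aux_core {Ω : Type*} [MeasurableSpace Ω] (P : Measure Ω)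
    {E : Type*} [NormedAddCommGroup E] [CompleteSpace E]
    (f : ℕ → Ω → E)
    (H : ∀ δ > (0:ℝ), ∀ ε > (0:ℝ), ∃ s : Finset E,
      ∀ n, P {ω | f n ω ∈ (⋃ y ∈ s, Metric.ball y δ)ᶜ} ≤ ENNReal.ofReal ε) :
    ∀ ε > (0:ℝ), ∃ K : Set E, IsCompact K ∧
      ∀ n, P {ω | f n ω ∉ K} ≤ ENNReal.ofReal ε := by
  intro ε hε
  obtain ⟨δseq, hδpos, hδsum⟩ := ENNReal.exists_pos_sum_of_countable
    (ENNReal.ofReal_pos.2 hε).ne' ℕ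
  choose s hs using fun j : ℕ =>
    H (1/(j+1)) (by positivity) (δseq j) (by exact_mod_cast hδpos j)
  set A : ℕ → Set E := fun j => ⋃ y ∈ s j, Metric.closedBall y (1/(j+1)) with hA
  set K := ⋂ j, A j with hK
  have hKclosed : IsClosed K := isClosed_iInter fun j =>
    (s j).finite_toSet.isClosed_biUnion fun _ _ => Metric.isClosed_closedBall
  have hKtb : TotallyBounded K := by
    rw [Metric.totallyBounded_iff]
    intro η hη
    obtain ⟨j, hj⟩ := exists_nat_one_div_lt hη
    refine ⟨s j, (s j).finite_toSet, ?_⟩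
    intro x hx
    have hxA := Set.mem_iInter.1 hx j
    simp only [hA, Set.mem_iUnion, Metric.mem_closedBall] at hxA
    obtain ⟨y, hy, hxy⟩ := hxA
    exact Set.mem_biUnion hy (Metric.mem_ball.2 (lt_of_le_of_lt hxy hj))
  refine ⟨K, TotallyBounded.isCompact_of_isClosed hKtb hKclosed, fun n => ?_⟩
  have hsub : {ω | f n ω ∉ K} ⊆
      ⋃ j, {ω | f n ω ∈ (⋃ y ∈ s j, Metric.ball y (1/(j+1)))ᶜ} := by
    intro ω hω
    simp only [Set.mem_setOf_eq, hK, Set.mem_iInter, not_forall] at hω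
    obtain ⟨j, hj⟩ := hω
    refine Set.mem_iUnion.2 ⟨j, ?_⟩
    simp only [Set.mem_setOf_eq, Set.mem_compl_iff]
    intro hmem
    apply hj
    simp only [Set.mem_iUnion, Metric.mem_ball] at hmem
    obtain ⟨y, hy, hxy⟩ := hmem
    exact Set.mem_biUnion hy (Metric.mem_closedBall.2 hxy.le)
  calc P {ω | f n ω ∉ K}
      ≤ P (⋃ j, {ω | f n ω ∈ (⋃ y ∈ s j, Metric.ball y (1/(j+1)))ᶜ}) := measure_mono hsub
    _ ≤ ∑' j, P {ω | f n ω ∈ (⋃ y ∈ s j, Metric.ball y (1/(j+1)))ᶜ} := measure_iUnion_le _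
    _ ≤ ∑' j, (δseq j : ℝ≥0∞) :=
        ENNReal.tsum_le_tsum fun j => (hs j n).trans_eq ENNReal.ofReal_coe_nnreal
    _ ≤ ENNReal.ofReal ε := hδsum.le

lemma aux_H_of_tendsto {Ω : Type*} [MeasurableSpace Ω] (P : Measure Ω) [IsProbabilityMeasure P]
    {E : Type*} [NormedAddCommGroup E] [TopologicalSpace.SeparableSpace E]
    [MeasurableSpace E] [BorelSpace E]
    (f : ℕ → Ω → E) (hf : ∀ n, Measurable (f n))
    (ν : Measure E) [IsProbabilityMeasure ν]
    (hw : ∀ g : BoundedContinuousFunction E ℝ,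
      Tendsto (fun n => ∫ ω, g (f n ω) ∂P) atTop (𝓝 (∫ x, g x ∂ν))) :
    ∀ δ > (0:ℝ), ∀ ε > (0:ℝ), ∃ s : Finset E,
      ∀ n, P {ω | f n ω ∈ (⋃ y ∈ s, Metric.ball y δ)ᶜ} ≤ ENNReal.ofReal ε := by
  intro δ hδ ε hε
  obtain ⟨s₀, hs₀⟩ := aux_single ν hδ (half_pos hε)
  have hFclosed : ∀ t : Finset E, IsClosed ((⋃ y ∈ t, Metric.ball y δ)ᶜ : Set E) :=
    fun t => (isOpen_biUnion fun _ _ => Metric.isOpen_ball).isClosed_compl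
  have hw' : Tendsto
      (fun n => (⟨P.map (f n), Measure.isProbabilityMeasure_map (hf n).aemeasurable⟩ :
        ProbabilityMeasure E)) atTop
      (@nhds (ProbabilityMeasure E) ProbabilityMeasure.instTopologicalSpace ⟨ν, inferInstance⟩) := by
    refine ProbabilityMeasure.tendsto_iff_forall_integral_tendsto.2 fun g => ?_
    have heq : ∀ n, ∫ x, g x ∂(P.map (f n)) = ∫ ω, g (f n ω) ∂P :=
      fun n => integral_map (hf n).aemeasurable g.continuous.aestronglyMeasurable
    simp only [ProbabilityMeasure.coe_mk, heq]
    exact hw g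
  have hlimsup := ProbabilityMeasure.limsup_measure_closed_le_of_tendsto hw' (hFclosed s₀)
  have hlt : ENNReal.ofReal (ε/2) < ENNReal.ofReal ε :=
    (ENNReal.ofReal_lt_ofReal_iff hε).2 (half_lt_self hε)
  have hev : ∀ᶠ n in atTop,
      (P.map (f n)) ((⋃ y ∈ s₀, Metric.ball y δ)ᶜ) < ENNReal.ofReal ε :=
    eventually_lt_of_limsup_lt (lt_of_le_of_lt (hlimsup.trans hs₀) hlt)
  obtain ⟨N, hN⟩ := eventually_atTop.1 hev
  have hPM : ∀ n, IsProbabilityMeasure (P.map (f n)) :=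
    fun n => Measure.isProbabilityMeasure_map (hf n).aemeasurable
  have hind : ∀ n : ℕ, ∃ t : Finset E,
      (P.map (f n)) (⋃ y ∈ t, Metric.ball y δ)ᶜ ≤ ENNReal.ofReal ε := by
    intro n
    haveI := hPM n
    exact aux_single (P.map (f n)) hδ hε
  choose t ht using hind
  classical
  refine ⟨s₀ ∪ (Finset.range N).biUnion t, fun n => ?_⟩
  have hmap : ∀ (u : Finset E), P {ω | f n ω ∈ (⋃ y ∈ u, Metric.ball y δ)ᶜ} =
      (P.map (f n)) ((⋃ y ∈ u, Metric.ball y δ)ᶜ) :=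
    fun u => (Measure.map_apply (hf n) (hFclosed u).measurableSet).symm
  have hmono : ∀ u v : Finset E, u ⊆ v →
      ((⋃ y ∈ v, Metric.ball y δ)ᶜ : Set E) ⊆ (⋃ y ∈ u, Metric.ball y δ)ᶜ := by
    intro u v huv
    apply Set.compl_subset_compl.2
    intro x hx
    simp only [Set.mem_iUnion] at hx ⊢
    obtain ⟨y, hy, hb⟩ := hx
    exact ⟨y, huv hy, hb⟩
  rw [hmap]
  rcases lt_or_ge n N with h | h
  · refine le_trans (measure_mono (hmono _ _ ?_)) (ht n)
    exact (Finset.subset_biUnion_of_mem t (Finset.mem_range.2 h)).trans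
      Finset.subset_union_right
  · exact le_trans (measure_mono (hmono _ _ Finset.subset_union_left)) (hN n h).le

/-- The measure of dependence `α(𝒜, ℬ)` between two sub-σ-fields. -/
def alphaDep {Ω : Type*} [MeasurableSpace Ω] (P : Measure Ω)
    (𝒜 ℬ : MeasurableSpace Ω) : ℝ :=
  sSup {r : ℝ | ∃ A B : Set Ω, MeasurableSet[𝒜] A ∧ MeasurableSet[ℬ] B ∧
    r = |(P (A ∩ B)).toReal - (P A).toReal * (P B).toReal|}

/-- The σ-field generated by the random variables `X k`, `k ∈ s`. -/
def sigmaGen {Ω E : Type*} [MeasurableSpace E] (X : ℕ → Ω → E) (s : Set ℕ) :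
    MeasurableSpace Ω :=
  ⨆ k ∈ s, MeasurableSpace.comap (X k) inferInstance

/-- The strong mixing coefficient `α(X; n)` of the sequence `X`. -/
def mixingCoef {Ω E : Type*} [MeasurableSpace Ω] [MeasurableSpace E]
    (P : Measure Ω) (X : ℕ → Ω → E) (n : ℕ) : ℝ :=
  ⨆ j : ℕ, alphaDep P (sigmaGen X {k | 1 ≤ k ∧ k ≤ j}) (sigmaGen X {k | j + n ≤ k})

/-- Tightness of the distributions of the third blocks
`W n = a n • (S n - S (m n + q n)) + b n - (a n / a (m n)) • b (m n)`. -/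
theorem third_block_tight
    {Ω : Type*} [MeasurableSpace Ω] (P : Measure Ω) [IsProbabilityMeasure P]
    {E : Type*} [NormedAddCommGroup E] [NormedSpace ℝ E] [CompleteSpace E]
    [TopologicalSpace.SeparableSpace E] [MeasurableSpace E] [BorelSpace E]
    (X : ℕ → Ω → E) (hXmeas : ∀ k, Measurable (X k))
    (a : ℕ → ℝ) (b : ℕ → E) (μ : Measure E) [IsProbabilityMeasure μ]
    -- (i) strong mixing
    (hmix : Tendsto (fun n => mixingCoef P X n) atTop (𝓝 0))
    -- (ii) positivity and infinitesimality
    (hapos : ∀ n, 0 < a n)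
    (hinfin : ∀ ε > 0,
      Tendsto (fun n => ⨆ k ∈ Finset.Icc 1 n, P {ω | a n * ‖X k ω‖ > ε})
        atTop (𝓝 0))
    -- (iii) weak convergence of `a n • S n + b n` to `μ`
    (hconv : ∀ f : BoundedContinuousFunction E ℝ,
      Tendsto (fun n => ∫ ω, f (a n • (∑ k ∈ Finset.Icc 1 n, X k ω) + b n) ∂P)
        atTop (𝓝 (∫ x, f x ∂μ)))
    (hnondeg : ¬ ∃ x : E, μ = Measure.dirac x)
    -- the blocking sequences
    (c : ℝ) (hc : c ∈ Set.Ioo (0 : ℝ) 1)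
    (m q : ℕ → ℕ) (hm1 : ∀ n, 1 ≤ m n) (hq1 : ∀ n, 1 ≤ q n)
    (hmTop : Tendsto m atTop atTop)
    (hnm : Tendsto (fun n => n - m n) atTop atTop)
    (hratio : Tendsto (fun n => a n / a (m n)) atTop (𝓝 c))
    (hqTop : Tendsto q atTop atTop)
    (hmq : ∀ᶠ n in atTop, m n + q n < n)
    -- the middle blocks tend to zero in probability
    (hV : ∀ ε > 0,
      Tendsto
        (fun n => P {ω | ε ≤
          ‖a n • ((∑ k ∈ Finset.Icc 1 (m n + q n), X k ω) -
            ∑ k ∈ Finset.Icc 1 (m n), X k ω)‖})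
        atTop (𝓝 0)) :
    -- conclusion: the distributions of the `W n` are uniformly tight
    ∀ ε > 0, ∃ K : Set E, IsCompact K ∧
      ∀ n, P {ω |
        (a n • ((∑ k ∈ Finset.Icc 1 n, X k ω) -
          ∑ k ∈ Finset.Icc 1 (m n + q n), X k ω) +
            b n - (a n / a (m n)) • b (m n)) ∉ K} ≤ ENNReal.ofReal ε := by
  intro ε hε
  classical
  set S : ℕ → Ω → E := fun n ω => ∑ k ∈ Finset.Icc 1 n, X k ω with hS_def
  have hS : ∀ n, Measurable (S n) := fun n => Finset.measurable_sum _ fun k _ => hXmeas k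
  set Y : ℕ → Ω → E := fun n ω => a n • S n ω + b n with hY_def
  have hY : ∀ n, Measurable (Y n) := fun n => ((hS n).const_smul (a n)).add_const (b n)
  set V : ℕ → Ω → E := fun n ω => a n • (S (m n + q n) ω - S (m n) ω) with hV_def
  have hVmeas : ∀ n, Measurable (V n) := fun n => ((hS _).sub (hS _)).const_smul (a n)
  set r : ℕ → ℝ := fun n => a n / a (m n) with hr_def
  -- tightness of the `Y` family
  have H_Y := aux_H_of_tendsto P Y hY μ (fun g => hconv g)
  obtain ⟨K₁, hK₁c, hK₁⟩ := aux_core P Y H_Y (ε/3) (by positivity)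
  -- tightness of the `V` family
  have H_V : ∀ δ > (0:ℝ), ∀ ε' > (0:ℝ), ∃ s : Finset E,
      ∀ n, P {ω | V n ω ∈ (⋃ y ∈ s, Metric.ball y δ)ᶜ} ≤ ENNReal.ofReal ε' := by
    intro δ hδ ε' hε'
    have h1 := (hV δ hδ).eventually_lt_const (ENNReal.ofReal_pos.2 hε')
    obtain ⟨N, hN⟩ := eventually_atTop.1 h1
    have hind : ∀ n : ℕ, ∃ t : Finset E,
        (P.map (V n)) (⋃ y ∈ t, Metric.ball y δ)ᶜ ≤ ENNReal.ofReal ε' := by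
      intro n
      haveI := Measure.isProbabilityMeasure_map (μ := P) (hVmeas n).aemeasurable
      exact aux_single (P.map (V n)) hδ hε'
    choose t ht using hind
    refine ⟨insert (0:E) ((Finset.range N).biUnion t), fun n => ?_⟩
    rcases lt_or_ge n N with h | h
    · have hmeasset : MeasurableSet ((⋃ y ∈ t n, Metric.ball y δ)ᶜ : Set E) :=
        (isOpen_biUnion fun (_ : E) _ => Metric.isOpen_ball).measurableSet.compl
      have hmap : P {ω | V n ω ∈ (⋃ y ∈ t n, Metric.ball y δ)ᶜ} =
          (P.map (V n)) ((⋃ y ∈ t n, Metric.ball y δ)ᶜ) :=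
        (Measure.map_apply (hVmeas n) hmeasset).symm
      refine le_trans (measure_mono ?_) (hmap ▸ ht n)
      intro ω hω
      simp only [Set.mem_setOf_eq, Set.mem_compl_iff, Set.mem_iUnion] at hω ⊢
      intro hmem
      obtain ⟨y, hy, hb⟩ := hmem
      exact hω ⟨y, Finset.mem_insert_of_mem (Finset.mem_biUnion.2 ⟨n, Finset.mem_range.2 h, hy⟩), hb⟩
    · refine le_trans (measure_mono ?_) (hN n h).le
      intro ω hω
      simp only [Set.mem_setOf_eq, Set.mem_compl_iff, Set.mem_iUnion] at hω
      simp only [Set.mem_setOf_eq]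
      by_contra hcon
      push_neg at hcon
      refine hω ⟨0, Finset.mem_insert_self _ _, ?_⟩
      rw [Metric.mem_ball, dist_zero_right]
      exact hcon
  obtain ⟨K₂, hK₂c, hK₂⟩ := aux_core P V H_V (ε/3) (by positivity)
  -- a compact set absorbing the scaled first blocks
  obtain ⟨R₁, hR₁⟩ := hratio.bddAbove_range
  obtain ⟨R₂, hR₂⟩ := hratio.bddBelow_range
  set R : ℝ := max |R₁| |R₂| with hR_def
  have hrIcc : ∀ n, r n ∈ Set.Icc (-R) R := by
    intro n
    have hub : r n ≤ R₁ := hR₁ ⟨n, rfl⟩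
    have hlb : R₂ ≤ r n := hR₂ ⟨n, rfl⟩
    constructor
    · calc -R ≤ -|R₂| := neg_le_neg (le_max_right _ _)
        _ ≤ R₂ := neg_abs_le R₂
        _ ≤ r n := hlb
    · calc r n ≤ R₁ := hub
        _ ≤ |R₁| := le_abs_self R₁
        _ ≤ R := le_max_left _ _
  set K₃ : Set E := (fun p : ℝ × E => p.1 • p.2) '' (Set.Icc (-R) R ×ˢ K₁) with hK₃_def
  have hK₃c : IsCompact K₃ := (isCompact_Icc.prod hK₁c).image continuous_smul
  set K : Set E := (fun p : E × E × E => p.1 - p.2.1 - p.2.2) '' (K₁ ×ˢ (K₂ ×ˢ K₃)) with hKdef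
  have hKc : IsCompact K := (hK₁c.prod (hK₂c.prod hK₃c)).image
    ((continuous_fst.sub (continuous_fst.comp continuous_snd)).sub
      (continuous_snd.comp continuous_snd))
  refine ⟨K, hKc, fun n => ?_⟩
  have hsub : {ω | (a n • ((∑ k ∈ Finset.Icc 1 n, X k ω) -
        ∑ k ∈ Finset.Icc 1 (m n + q n), X k ω) + b n - (a n / a (m n)) • b (m n)) ∉ K} ⊆
      {ω | Y n ω ∉ K₁} ∪ ({ω | V n ω ∉ K₂} ∪ {ω | Y (m n) ω ∉ K₁}) := by
    intro ω hω
    simp only [Set.mem_setOf_eq, Set.mem_union]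
    by_contra hcon
    push_neg at hcon
    obtain ⟨h1, h2, h3⟩ := hcon
    apply hω
    have hz : r n • Y (m n) ω ∈ K₃ := ⟨(r n, Y (m n) ω), ⟨hrIcc n, h3⟩, rfl⟩
    refine ⟨(Y n ω, V n ω, r n • Y (m n) ω), ⟨h1, h2, hz⟩, ?_⟩
    show Y n ω - V n ω - r n • Y (m n) ω = _
    have hcancel : a n / a (m n) * a (m n) = a n := div_mul_cancel₀ (a n) (hapos (m n)).ne'
    simp only [hY_def, hV_def, hS_def, hr_def, smul_sub, smul_add, smul_smul, hcancel]
    abel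
  calc P {ω | (a n • ((∑ k ∈ Finset.Icc 1 n, X k ω) -
        ∑ k ∈ Finset.Icc 1 (m n + q n), X k ω) + b n - (a n / a (m n)) • b (m n)) ∉ K}
      ≤ P ({ω | Y n ω ∉ K₁} ∪ ({ω | V n ω ∉ K₂} ∪ {ω | Y (m n) ω ∉ K₁})) := measure_mono hsub
    _ ≤ P {ω | Y n ω ∉ K₁} + P ({ω | V n ω ∉ K₂} ∪ {ω | Y (m n) ω ∉ K₁}) := measure_union_le _ _
    _ ≤ P {ω | Y n ω ∉ K₁} + (P {ω | V n ω ∉ K₂} + P {ω | Y (m n) ω ∉ K₁}) :=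
        add_le_add le_rfl (measure_union_le _ _)
    _ ≤ ENNReal.ofReal (ε/3) + (ENNReal.ofReal (ε/3) + ENNReal.ofReal (ε/3)) :=
        add_le_add (hK₁ n) (add_le_add (hK₂ n) (hK₁ (m n)))
    _ = ENNReal.ofReal ε := by
        rw [← ENNReal.ofReal_add (by positivity) (by positivity),
          ← ENNReal.ofReal_add (by positivity) (by positivity)]
        congr 1
        ring
end
end
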